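/- arXiv:2504.02088 — 4 statements merged into one kernel-verified Lean document; each statement's English description precedes it below -/
import Mathlib

section
/- Let G be a connected finite simple graph on a nonempty vertex set V. Fix r ∈ ℕ. For each vertex v ∈ V, let n_v ∈ ℕ, let A_v be a real r × n_v matrix, and let x_v ∈ ℝ^{n_v}. Let c ∈ ℝ^r and let C : V → ℝ^r satisfy ∑_{v ∈ V} C_v = c. Then the globally coupled constraint ∑_{v ∈ V} A_v x_v + c ≤ 0 (componentwise) holds if and only if there exists z : V → ℝ^r such that for every vertex v ∈ V, A_v x_v + ∑_{u ∈ N(v)} (z_v − z_u) + C_v ≤ 0 (componentwise), where N(v) is the set of neighbors of v in G. -/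
open Matrix Finset

section helpers
variable {V : Type*} [Fintype V] [DecidableEq V] (G : SimpleGraph V) [DecidableRel G.Adj]

lemma lap_mulVec_eq (f : V → ℝ) (v : V) :
    (G.lapMatrix ℝ *ᵥ f) v = ∑ u ∈ G.neighborFinset v, (f v - f u) := by
  rw [SimpleGraph.lapMatrix_mulVec_apply, Finset.sum_sub_distrib, Finset.sum_const,
    G.card_neighborFinset_eq_degree v]
  ring

lemma sum_lap_mulVec (f : V → ℝ) : ∑ v, (G.lapMatrix ℝ *ᵥ f) v = 0 := by
  simp_rw [Matrix.mulVec, dotProduct]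
  rw [Finset.sum_comm]
  refine Finset.sum_eq_zero fun u _ => ?_
  rw [← Finset.sum_mul]
  have h1 : ∀ v, G.lapMatrix ℝ v u = G.lapMatrix ℝ u v := fun v =>
    (SimpleGraph.isSymm_lapMatrix (R := ℝ) (G := G)).apply u v
  have h2 := congrFun (G.lapMatrix_mulVec_const_eq_zero (R := ℝ)) u
  simp only [Matrix.mulVec, dotProduct, mul_one, Pi.zero_apply] at h2
  simp_rw [h1]
  rw [h2, zero_mul]

lemma lap_surj (hG : G.Connected) (d : V → ℝ) (hd : ∑ v, d v = 0) :
    ∃ w : V → ℝ, G.lapMatrix ℝ *ᵥ w = d := by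
  have : Nonempty V := hG.nonempty
  obtain ⟨v0⟩ := ‹Nonempty V›
  set L : (V → ℝ) →ₗ[ℝ] (V → ℝ) := Matrix.toLin' (G.lapMatrix ℝ) with hL
  set φ : (V → ℝ) →ₗ[ℝ] ℝ :=
    { toFun := fun f => ∑ v, f v
      map_add' := fun f g => by simp [Finset.sum_add_distrib]
      map_smul' := fun a f => by simp [Finset.mul_sum] } with hφ
  have hφsurj : LinearMap.range φ = ⊤ := by
    rw [LinearMap.range_eq_top]
    intro t
    exact ⟨Pi.single v0 t, by simp [hφ, Finset.sum_pi_single]⟩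
  have hker : LinearMap.ker L = Submodule.span ℝ {fun _ : V => (1:ℝ)} := by
    apply le_antisymm
    · intro f hf
      rw [LinearMap.mem_ker, hL] at hf
      rw [Matrix.toLin'_apply, SimpleGraph.lapMatrix_mulVec_eq_zero_iff_forall_reachable] at hf
      have : f = f v0 • (fun _ : V => (1:ℝ)) := by
        funext v
        simpa using hf v v0 (hG v v0)
      rw [this]
      exact Submodule.smul_mem _ _ (Submodule.mem_span_singleton_self _)
    · rw [Submodule.span_le, Set.singleton_subset_iff]
      simp only [SetLike.mem_coe, LinearMap.mem_ker, hL, Matrix.toLin'_apply]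
      exact G.lapMatrix_mulVec_const_eq_zero
  have hone : (fun _ : V => (1:ℝ)) ≠ 0 := by
    intro h
    have := congrFun h v0
    simp at this
  have hkerdim : Module.finrank ℝ (LinearMap.ker L) = 1 := by
    rw [hker, finrank_span_singleton hone]
  have hrn := LinearMap.finrank_range_add_finrank_ker L
  have hrnφ := LinearMap.finrank_range_add_finrank_ker φ
  have hcard : Module.finrank ℝ (V → ℝ) = Fintype.card V := by
    simp [Module.finrank_pi]
  have hφrange : Module.finrank ℝ (LinearMap.range φ) = 1 := by
    rw [hφsurj]; simp
  have hle : LinearMap.range L ≤ LinearMap.ker φ := by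
    rintro f ⟨g, rfl⟩
    simp only [LinearMap.mem_ker, hφ, hL, LinearMap.coe_mk, AddHom.coe_mk, Matrix.toLin'_apply]
    exact sum_lap_mulVec G g
  have heq : LinearMap.range L = LinearMap.ker φ := by
    apply Submodule.eq_of_le_of_finrank_le hle
    omega
  have hd' : d ∈ LinearMap.ker φ := by
    simp only [LinearMap.mem_ker, hφ, LinearMap.coe_mk, AddHom.coe_mk]
    exact hd
  rw [← heq] at hd'
  obtain ⟨w, hw⟩ := hd'
  exact ⟨w, by rw [← Matrix.toLin'_apply]; exact hw⟩

end helpers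


/-- Paper's Theorem 1, decoupling the globally coupled constraint.
Let `G` be a connected finite simple graph on a nonempty vertex set `V`, `r : ℕ`,
and for each vertex `v` let `A v` be a real `r × n v` matrix and `x v ∈ ℝ^{n v}`.
Let `c ∈ ℝ^r` and `C : V → ℝ^r` with `∑ v, C v = c`. Then
`∑ v, A v *ᵥ x v + c ≤ 0` componentwise iff there exists `z : V → ℝ^r` such that
for every `v`, `A v *ᵥ x v + ∑_{u ∈ N(v)} (z v - z u) + C v ≤ 0` componentwise. -/
theorem decoupling_coupled_constraint
    {V : Type*} [Fintype V] [Nonempty V] [DecidableEq V]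
    (G : SimpleGraph V) [DecidableRel G.Adj] (hG : G.Connected)
    (r : ℕ) (n : V → ℕ)
    (A : (v : V) → Matrix (Fin r) (Fin (n v)) ℝ)
    (x : (v : V) → Fin (n v) → ℝ)
    (c : Fin r → ℝ) (C : V → Fin r → ℝ) (hC : ∑ v, C v = c) :
    (∑ v, (A v).mulVec (x v)) + c ≤ 0 ↔
      ∃ z : V → Fin r → ℝ, ∀ v : V,
        (A v).mulVec (x v) + (∑ u ∈ G.neighborFinset v, (z v - z u)) + C v ≤ 0 := by
  classical
  set T : Fin r → ℝ := (∑ v, (A v).mulVec (x v)) + c with hT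
  have hNpos : (0:ℝ) < (Fintype.card V : ℝ) := by
    exact_mod_cast Fintype.card_pos
  constructor
  · intro h
    have key : ∀ j : Fin r, ∃ w : V → ℝ, G.lapMatrix ℝ *ᵥ w =
        fun v => T j / (Fintype.card V : ℝ) - ((A v).mulVec (x v) j + C v j) := by
      intro j
      apply lap_surj G hG
      rw [Finset.sum_sub_distrib, Finset.sum_const, Finset.sum_add_distrib]
      have h1 : ∑ v, (A v).mulVec (x v) j = (∑ v, (A v).mulVec (x v)) j := by
        rw [Finset.sum_apply]
      have h2 : ∑ v, C v j = c j := by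
        rw [← Finset.sum_apply _ _ (fun v => C v), hC]
      rw [h1, h2, nsmul_eq_mul, hT]
      field_simp
      rw [Finset.card_univ, Pi.add_apply]; ring
    choose w hw using key
    refine ⟨fun v j => w j v, fun v => ?_⟩
    intro j
    have hLj : (∑ u ∈ G.neighborFinset v, ((fun j' => w j' v) - fun j' => w j' u)) j
        = (G.lapMatrix ℝ *ᵥ w j) v := by
      rw [Finset.sum_apply, lap_mulVec_eq]
      simp
    simp only [Pi.add_apply, Pi.zero_apply]
    rw [hLj, hw j]
    have hTj : T j ≤ 0 := h j
    have : (A v).mulVec (x v) j + (T j / (Fintype.card V : ℝ)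
        - ((A v).mulVec (x v) j + C v j)) + C v j = T j / (Fintype.card V : ℝ) := by ring
    rw [this]
    exact div_nonpos_of_nonpos_of_nonneg hTj (le_of_lt hNpos)
  · rintro ⟨z, hz⟩
    intro j
    have hsum : ∑ v, ((A v).mulVec (x v) + (∑ u ∈ G.neighborFinset v, (z v - z u)) + C v) j ≤ 0 :=
      Finset.sum_nonpos fun v _ => hz v j
    have hzero : ∑ v, (∑ u ∈ G.neighborFinset v, (z v - z u)) j = 0 := by
      have : ∀ v, (∑ u ∈ G.neighborFinset v, (z v - z u)) j
          = (G.lapMatrix ℝ *ᵥ fun u => z u j) v := by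
        intro v
        rw [Finset.sum_apply, lap_mulVec_eq]
        simp
      simp_rw [this]
      exact sum_lap_mulVec G _
    simp only [Pi.add_apply] at hsum
    rw [Finset.sum_add_distrib, Finset.sum_add_distrib, hzero, add_zero] at hsum
    have h1 : ∑ v, (A v).mulVec (x v) j = (∑ v, (A v).mulVec (x v)) j := by
      rw [Finset.sum_apply]
    have h2 : ∑ v, C v j = c j := by
      rw [← Finset.sum_apply _ _ (fun v => C v), hC]
    rw [h1, h2] at hsum
    rw [hT]
    simpa using hsum
end

section
/- Let G be a connected finite simple graph on a nonempty vertex set V with Laplacian matrix L (indexed by V × V). Fix r ∈ ℕ. For each v ∈ V, let n_v ∈ ℕ, A_v a real r × n_v matrix, and x_v ∈ ℝ^{n_v}. Let C : V → ℝ^r. If ∑_{v ∈ V} (A_v x_v + C_v) ≤ 0 (componentwise), then there exists z : V → ℝ^r such that for every v ∈ V, A_v x_v + ∑_{u ∈ V} L_{v,u} · z_u + C_v ≤ 0 (componentwise). -/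
open Matrix

lemma lap_surj_on_mean_zero {V : Type*} [Fintype V] [Nonempty V] [DecidableEq V]
    (G : SimpleGraph V) [DecidableRel G.Adj] (hG : G.Connected)
    (w : V → ℝ) (hw : ∑ v, w v = 0) :
    ∃ z : V → ℝ, (G.lapMatrix ℝ) *ᵥ z = w := by
  classical
  set f := Matrix.toLin' (G.lapMatrix ℝ)
  -- sum functional
  let l : (V → ℝ) →ₗ[ℝ] ℝ :=
    { toFun := fun g => ∑ v, g v
      map_add' := by intro a b; simp [Finset.sum_add_distrib]
      map_smul' := by intro c a; simp [Finset.mul_sum] }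
  have hl_surj : LinearMap.range l = ⊤ := by
    rw [LinearMap.range_eq_top]
    intro c
    refine ⟨fun _ => c / (Fintype.card V : ℝ), ?_⟩
    have hc : (Fintype.card V : ℝ) ≠ 0 := by
      exact_mod_cast Fintype.card_ne_zero
    simp only [l, LinearMap.coe_mk, AddHom.coe_mk, Finset.sum_const, Finset.card_univ,
      nsmul_eq_mul]
    field_simp
  -- range f ⊆ ker l
  have hcol : ∀ u, ∑ v, (G.lapMatrix ℝ) v u = 0 := by
    intro u
    have := congrFun (G.lapMatrix_mulVec_const_eq_zero (R := ℝ)) u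
    simp only [mulVec, dotProduct, mul_one] at this
    calc ∑ v, (G.lapMatrix ℝ) v u = ∑ v, (G.lapMatrix ℝ) u v :=
          Finset.sum_congr rfl fun v _ => (G.isSymm_lapMatrix (R := ℝ)).apply u v
      _ = 0 := by simpa using this
  have hsub : LinearMap.range f ≤ LinearMap.ker l := by
    rintro _ ⟨z, rfl⟩
    simp only [LinearMap.mem_ker, l, LinearMap.coe_mk, AddHom.coe_mk]
    have : ∀ v, f z v = ∑ u, (G.lapMatrix ℝ) v u * z u := by
      intro v; simp [f, Matrix.toLin'_apply, mulVec, dotProduct]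
    rw [Finset.sum_congr rfl fun v _ => this v, Finset.sum_comm]
    simp [← Finset.sum_mul, hcol]
  -- dimensions
  have hker : Module.finrank ℝ (LinearMap.ker f) = 1 := by
    have := G.card_connectedComponent_eq_finrank_ker_toLin'_lapMatrix
    rw [← this]
    have : Fintype.card G.ConnectedComponent = 1 := by
      refine Fintype.card_eq_one_iff.mpr
        ⟨G.connectedComponentMk (Classical.arbitrary V), ?_⟩
      refine SimpleGraph.ConnectedComponent.ind fun v => ?_
      exact SimpleGraph.ConnectedComponent.sound (hG.preconnected _ _)
    exact this
  have hrn := LinearMap.finrank_range_add_finrank_ker f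
  have hdom : Module.finrank ℝ (V → ℝ) = Fintype.card V := by
    simp [Module.finrank_pi]
  have hrange : Module.finrank ℝ (LinearMap.range f) = Fintype.card V - 1 := by
    omega
  have hlker : Module.finrank ℝ (LinearMap.ker l) = Fintype.card V - 1 := by
    have hrn' := LinearMap.finrank_range_add_finrank_ker l
    have : Module.finrank ℝ (LinearMap.range l) = 1 := by
      rw [hl_surj]; simp
    omega
  have heq : LinearMap.range f = LinearMap.ker l :=
    Submodule.eq_of_le_of_finrank_le hsub (by omega)
  have hwmem : w ∈ LinearMap.range f := by
    rw [heq]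
    simpa [l, LinearMap.mem_ker] using hw
  obtain ⟨z, hz⟩ := hwmem
  exact ⟨z, by simpa [f, Matrix.toLin'_apply] using hz⟩

/-- forward direction of the paper's Theorem 1.
If `G` is a connected finite simple graph with Laplacian `L` and
`∑ v, (A v *ᵥ x v + C v) ≤ 0` componentwise, then there exists `z : V → ℝ^r`
such that for every `v`, `A v *ᵥ x v + ∑ u, L v u • z u + C v ≤ 0` componentwise. -/
theorem decoupling_forward
    {V : Type*} [Fintype V] [Nonempty V] [DecidableEq V]
    (G : SimpleGraph V) [DecidableRel G.Adj] (hG : G.Connected)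
    (r : ℕ) (n : V → ℕ)
    (A : (v : V) → Matrix (Fin r) (Fin (n v)) ℝ)
    (x : (v : V) → Fin (n v) → ℝ)
    (C : V → Fin r → ℝ)
    (h : ∑ v, ((A v).mulVec (x v) + C v) ≤ 0) :
    ∃ z : V → Fin r → ℝ, ∀ v : V,
      (A v).mulVec (x v) + (∑ u, (G.lapMatrix ℝ) v u • z u) + C v ≤ 0 := by
  classical
  set b : V → Fin r → ℝ := fun v => (A v).mulVec (x v) + C v with hb
  have hbsum : ∀ i, ∑ v, b v i ≤ 0 := by
    intro i
    have := h i
    simpa [Finset.sum_apply] using this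
  -- for each coordinate i, solve
  have key : ∀ i : Fin r, ∃ zi : V → ℝ, (G.lapMatrix ℝ) *ᵥ zi =
      fun v => (∑ u, b u i) / (Fintype.card V : ℝ) - b v i := by
    intro i
    apply lap_surj_on_mean_zero G hG
    have hc : (Fintype.card V : ℝ) ≠ 0 := by exact_mod_cast Fintype.card_ne_zero
    rw [Finset.sum_sub_distrib, Finset.sum_const, Finset.card_univ, nsmul_eq_mul,
      mul_div_cancel₀ _ hc, sub_self]
  choose zz hzz using key
  refine ⟨fun v i => zz i v, fun v i => ?_⟩
  have hc : (0:ℝ) < (Fintype.card V : ℝ) := by exact_mod_cast Fintype.card_pos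
  have h1 : (∑ u, (G.lapMatrix ℝ) v u • (fun j => zz j u)) i
      = (∑ u, b u i) / (Fintype.card V : ℝ) - b v i := by
    have := congrFun (hzz i) v
    simp only [mulVec, dotProduct] at this
    rw [Finset.sum_apply]
    simpa [smul_eq_mul] using this
  have : ((A v).mulVec (x v) + (∑ u, (G.lapMatrix ℝ) v u • (fun j => zz j u)) + C v) i
      = (∑ u, b u i) / (Fintype.card V : ℝ) := by
    simp only [Pi.add_apply, h1, hb]
    ring
  rw [this]
  exact div_nonpos_of_nonpos_of_nonneg (hbsum i) hc.le
end

section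
/- Let N, M ∈ ℕ. Let f : ℝ^N → ℝ be convex and differentiable, and let g : ℝ^N → ℝ^M have each component g_j convex and differentiable. Define the Lagrangian 𝓛(η, λ) = f(η) + ⟨λ, g(η)⟩ for η ∈ ℝ^N, λ ∈ ℝ^M. For a, b ∈ ℝ define [a]_b^+ = a if b > 0 and [a]_b^+ = max(0, a) if b ≤ 0, extended componentwise to vectors. Suppose (η†, λ†) with λ† ≥ 0 componentwise is a saddle point of 𝓛 over ℝ^N × ℝ^M_{≥0}, i.e., 𝓛(η†, λ) ≤ 𝓛(η†, λ†) ≤ 𝓛(η, λ†) for all η ∈ ℝ^N and all λ ≥ 0. Then for every η ∈ ℝ^N and every λ ∈ ℝ^M with λ ≥ 0 componentwise: −⟨η − η†, ∇f(η) + ∑_{j=1}^M λ_j ∇g_j(η)⟩ + ⟨λ − λ†, [g(η)]_λ^+⟩ ≤ 0. -/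
open scoped RealInnerProductSpace

/-- The projection operator `[a]_b^+`: equal to `a` if `b > 0`,
and to `max 0 a` otherwise. -/
noncomputable def posProj (a b : ℝ) : ℝ := if 0 < b then a else max 0 a

/-- Gradient inequality for a convex differentiable function. -/
lemma convexOn_grad_ineq {F : Type*} [NormedAddCommGroup F] [InnerProductSpace ℝ F]
    [CompleteSpace F] {f : F → ℝ} (hf : ConvexOn ℝ Set.univ f) {x gx : F}
    (h : HasGradientAt f gx x) (y : F) : f x + ⟪gx, y - x⟫ ≤ f y := by
  set φ : ℝ → ℝ := fun t => f (x + t • (y - x)) with hφ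
  have hline : HasDerivAt (fun t : ℝ => x + t • (y - x)) (y - x) 0 := by
    have := ((hasDerivAt_id (0 : ℝ)).smul_const (y - x)).const_add x
    simpa using this
  have hfd' : HasFDerivAt f (InnerProductSpace.toDual ℝ F gx) (x + (0 : ℝ) • (y - x)) := by
    simpa using (hasGradientAt_iff_hasFDerivAt.mp h)
  have hφd : HasDerivAt φ ⟪gx, y - x⟫ 0 := by
    have := hfd'.comp_hasDerivAt 0 hline
    exact this
  have hten : Filter.Tendsto (slope φ 0) (nhdsWithin 0 (Set.Ioi 0)) (nhds ⟪gx, y - x⟫) := by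
    have := (hφd.hasDerivWithinAt (s := Set.Ioi (0:ℝ)))
    rw [hasDerivWithinAt_iff_tendsto_slope] at this
    simpa [Set.diff_singleton_eq_self (by simp : (0:ℝ) ∉ Set.Ioi (0:ℝ))] using this
  have hle : ⟪gx, y - x⟫ ≤ f y - f x := by
    refine le_of_tendsto hten ?_
    filter_upwards [Ioc_mem_nhdsGT_of_mem (by norm_num : (0:ℝ) ∈ Set.Ico (0:ℝ) 1)] with t ht
    obtain ⟨ht0, ht1⟩ := ht
    have hconv : φ t ≤ (1 - t) * f x + t * f y := by
      have := hf.2 (Set.mem_univ x) (Set.mem_univ y) (by linarith : (0:ℝ) ≤ 1 - t)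
        ht0.le (by ring)
      have heq : (1 - t) • x + t • y = x + t • (y - x) := by
        rw [smul_sub, sub_smul]; module
      simpa [hφ, heq] using this
    have hφ0 : φ 0 = f x := by simp [hφ]
    rw [slope_def_field, hφ0, sub_zero, div_le_iff₀ ht0]
    calc φ t - f x ≤ (1 - t) * f x + t * f y - f x := by linarith
      _ = (f y - f x) * t := by ring
  linarith

/-- the Lyapunov function is nonincreasing along the projected
saddle-point flow; central estimate in the appendix proof of the paper's
Theorem 2(b). Let `f : ℝ^N → ℝ` be convex and differentiable and `g : ℝ^N → ℝ^M`
have convex differentiable components, with Lagrangian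
`𝓛(η, λ) = f η + ⟨λ, g η⟩`. If `(η†, λ†)` with `λ† ≥ 0` is a saddle point of `𝓛`
over `ℝ^N × ℝ^M_{≥0}`, then for all `η` and all `λ ≥ 0`,
`−⟨η − η†, ∇f(η) + ∑ j, λ j • ∇g_j(η)⟩ + ⟨λ − λ†, [g η]_λ^+⟩ ≤ 0`. -/
theorem saddle_point_lyapunov_derivative_nonpos
    (N M : ℕ)
    (f : EuclideanSpace ℝ (Fin N) → ℝ)
    (g : EuclideanSpace ℝ (Fin N) → Fin M → ℝ)
    (hf : ConvexOn ℝ Set.univ f) (hfd : Differentiable ℝ f)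
    (hg : ∀ j, ConvexOn ℝ Set.univ (fun η => g η j))
    (hgd : ∀ j, Differentiable ℝ (fun η => g η j))
    (ηd : EuclideanSpace ℝ (Fin N)) (lamd : Fin M → ℝ) (hlamd : 0 ≤ lamd)
    (hsaddle₁ : ∀ lam : Fin M → ℝ, 0 ≤ lam →
      f ηd + ∑ j, lam j * g ηd j ≤ f ηd + ∑ j, lamd j * g ηd j)
    (hsaddle₂ : ∀ η : EuclideanSpace ℝ (Fin N),
      f ηd + ∑ j, lamd j * g ηd j ≤ f η + ∑ j, lamd j * g η j)
    (η : EuclideanSpace ℝ (Fin N)) (lam : Fin M → ℝ) (hlam : 0 ≤ lam) :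
    -⟪η - ηd, gradient f η + ∑ j, lam j • gradient (fun η' => g η' j) η⟫
      + ∑ j, (lam j - lamd j) * posProj (g η j) (lam j) ≤ 0 := by
  set L : EuclideanSpace ℝ (Fin N) → ℝ := fun η' => f η' + ∑ j, lam j * g η' j with hL
  set G : EuclideanSpace ℝ (Fin N) :=
    gradient f η + ∑ j, lam j • gradient (fun η' => g η' j) η with hG
  -- L is convex
  have hLconv : ConvexOn ℝ Set.univ L := by
    refine hf.add ?_
    have : ∀ j : Fin M, ConvexOn ℝ Set.univ (fun η' => lam j * g η' j) := fun j => by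
      simpa [smul_eq_mul] using (hg j).smul (hlam j)
    classical
    have := Finset.univ.sum_induction (fun j => fun η' => lam j * g η' j)
      (ConvexOn ℝ Set.univ) (fun a b ha hb => ha.add hb)
      (by exact convexOn_const (0:ℝ) convex_univ) (fun j _ => this j)
    convert this using 1
    · rfl
    ext η'
    simp
  -- L has gradient G at η
  have hLgrad : HasGradientAt L G η := by
    rw [hasGradientAt_iff_hasFDerivAt]
    have h1 : HasFDerivAt f (InnerProductSpace.toDual ℝ _ (gradient f η)) η :=
      hasGradientAt_iff_hasFDerivAt.mp (hfd η).hasGradientAt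
    have h2 : HasFDerivAt (fun η' => ∑ j, lam j * g η' j)
        (∑ j, lam j • InnerProductSpace.toDual ℝ _ (gradient (fun η' => g η' j) η)) η := by
      refine HasFDerivAt.fun_sum fun j _ => ?_
      exact (hasGradientAt_iff_hasFDerivAt.mp ((hgd j) η).hasGradientAt).const_mul (lam j)
    have := h1.add h2
    convert this using 1
    · rfl
    · rfl
    · rfl
    rw [hG, map_add, map_sum]
    congr 1
    refine Finset.sum_congr rfl fun j _ => ?_
    rw [map_smul]
  -- gradient inequality: -⟪η - ηd, G⟫ ≤ L ηd - L η
  have key : -⟪η - ηd, G⟫ ≤ L ηd - L η := by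
    have := convexOn_grad_ineq hLconv hLgrad ηd
    have hswap : ⟪G, ηd - η⟫ = -⟪η - ηd, G⟫ := by
      rw [real_inner_comm, show ηd - η = -(η - ηd) by abel, inner_neg_left]
    linarith [this, hswap ▸ this]
  -- projection bound
  have hproj : ∑ j, (lam j - lamd j) * posProj (g η j) (lam j)
      ≤ ∑ j, (lam j - lamd j) * g η j := by
    refine Finset.sum_le_sum fun j _ => ?_
    unfold posProj
    by_cases hpos : 0 < lam j
    · simp [hpos]
    · have hlamj : lam j = 0 := le_antisymm (not_lt.mp hpos) (hlam j)
      simp only [hlamj, lt_irrefl, if_false, zero_sub]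
      have h1 : g η j ≤ max 0 (g η j) := le_max_right _ _
      have h2 : 0 ≤ lamd j * (max 0 (g η j) - g η j) := mul_nonneg (hlamd j) (by linarith)
      nlinarith [h2]
  have hsum : ∑ j, (lam j - lamd j) * g η j
      = ∑ j, lam j * g η j - ∑ j, lamd j * g η j := by
    rw [← Finset.sum_sub_distrib]
    exact Finset.sum_congr rfl fun j _ => by ring
  have s1 := hsaddle₁ lam hlam
  have s2 := hsaddle₂ η
  have hLη : L η = f η + ∑ j, lam j * g η j := rfl
  have hLηd : L ηd = f ηd + ∑ j, lam j * g ηd j := rfl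
  linarith
end

section
/- Let G be a connected finite simple graph on a nonempty vertex set V with Laplacian matrix L, and fix r ∈ ℕ. For each v ∈ V let n_v ∈ ℕ, let A_v be a real r × n_v matrix, and let C : V → ℝ^r. Let f_v : ℝ^{n_v} → ℝ be convex and differentiable for each v, and write x = (x_v)_{v ∈ V}, F(x) = ∑_{v ∈ V} f_v(x_v). Define the Lagrangian 𝓛(x, z, λ) = F(x) + ∑_{v ∈ V} ⟨λ_v, A_v x_v + ∑_{u ∈ V} L_{v,u} · z_u + C_v⟩ for z, λ : V → ℝ^r. Suppose (x*, z*, λ*) with λ*_v ≥ 0 componentwise for all v is a saddle point of 𝓛 over (∏_v ℝ^{n_v}) × (ℝ^r)^V × ((ℝ^r_{≥0})^V), i.e., 𝓛(x*, z*, λ) ≤ 𝓛(x*, z*, λ*) ≤ 𝓛(x, z, λ*) for all x, z and all λ with λ_v ≥ 0 for all v. Then x* is a global minimizer of F over the original coupled feasible set: F(x*) ≤ F(x) for every x satisfying ∑_{v ∈ V} A_v x_v + ∑_{v ∈ V} C_v ≤ 0 componentwise. -/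
open Matrix Finset

lemma lap_surj' {V : Type*} [Fintype V] [Nonempty V] [DecidableEq V]
    (G : SimpleGraph V) [DecidableRel G.Adj] (hG : G.Connected)
    (y : V → ℝ) (hy : ∑ v, y v = 0) : ∃ z : V → ℝ, G.lapMatrix ℝ *ᵥ z = y := by
  classical
  set T := Matrix.toLin' (G.lapMatrix ℝ) with hT
  have hker : Module.finrank ℝ (LinearMap.ker T) = 1 := by
    rw [hT, ← G.card_connectedComponent_eq_finrank_ker_toLin'_lapMatrix]
    rw [Fintype.card_eq_one_iff]
    obtain ⟨v⟩ := (inferInstance : Nonempty V)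
    refine ⟨G.connectedComponentMk v, ?_⟩
    intro c
    induction c using SimpleGraph.ConnectedComponent.ind with
    | _ w => exact SimpleGraph.ConnectedComponent.eq.mpr (hG.preconnected w v)
  let φ : (V → ℝ) →ₗ[ℝ] ℝ :=
    { toFun := fun x => ∑ v, x v
      map_add' := by intros; simp [Finset.sum_add_distrib]
      map_smul' := by intros; simp [Finset.mul_sum] }
  have hcol : ∀ u, ∑ v, G.lapMatrix ℝ v u = 0 := by
    intro u
    have h1 := congrFun (G.lapMatrix_mulVec_const_eq_zero (R := ℝ)) u
    simp [Matrix.mulVec, dotProduct] at h1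
    rw [← h1]
    refine Finset.sum_congr rfl fun v _ => ?_
    exact congrFun (congrFun (G.isSymm_lapMatrix (R := ℝ)).eq u) v
  have hrange : LinearMap.range T ≤ LinearMap.ker φ := by
    rintro _ ⟨z, rfl⟩
    simp only [LinearMap.mem_ker, hT, Matrix.toLin'_apply]
    show ∑ v, (G.lapMatrix ℝ *ᵥ z) v = 0
    simp only [Matrix.mulVec, dotProduct]
    rw [Finset.sum_comm]
    simp only [← Finset.sum_mul]
    simp [hcol]
  have hsurj : Function.Surjective φ := by
    intro c
    refine ⟨fun _ => c / Fintype.card V, ?_⟩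
    show ∑ _v : V, c / Fintype.card V = c
    rw [Finset.sum_const]
    have hc : (Fintype.card V : ℝ) ≠ 0 := by
      simp [Fintype.card_ne_zero]
    rw [nsmul_eq_mul, Finset.card_univ]
    field_simp
  have h1 : Module.finrank ℝ (LinearMap.range T) + 1 = Fintype.card V := by
    have := LinearMap.finrank_range_add_finrank_ker T
    rw [hker, Module.finrank_fintype_fun_eq_card] at this
    exact this
  have h2 : Module.finrank ℝ (LinearMap.ker φ) + 1 = Fintype.card V := by
    have := LinearMap.finrank_range_add_finrank_ker φ
    rw [LinearMap.range_eq_top.mpr hsurj, finrank_top, Module.finrank_self,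
      Module.finrank_fintype_fun_eq_card] at this
    omega
  have heq : LinearMap.range T = LinearMap.ker φ :=
    Submodule.eq_of_le_of_finrank_le hrange (by omega)
  have hy' : y ∈ LinearMap.ker φ := hy
  rw [← heq] at hy'
  obtain ⟨z, hz⟩ := hy'
  exact ⟨z, by rw [← Matrix.toLin'_apply]; exact hz⟩

/-- combination of the paper's Theorem 1 and Theorem 2(a).
Let `G` be a connected finite simple graph on a nonempty vertex set `V` with
Laplacian `L`, `r : ℕ`; for each `v` let `A v` be a real `r × n v` matrix,
`C : V → ℝ^r`, and `f v : ℝ^{n v} → ℝ` convex and differentiable, with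
`F x = ∑ v, f v (x v)`. Define the Lagrangian
`𝓛(x, z, λ) = F x + ∑ v, ⟨λ v, A v *ᵥ x v + ∑ u, L v u • z u + C v⟩`.
If `(x*, z*, λ*)` with `λ* v ≥ 0` for all `v` is a saddle point of `𝓛` over
`(∏ v, ℝ^{n v}) × (ℝ^r)^V × ((ℝ^r_{≥0})^V)`, then `x*` globally minimizes `F`
over the coupled feasible set `{x : ∑ v, A v *ᵥ x v + ∑ v, C v ≤ 0}`. -/
theorem saddle_point_of_decoupled_lagrangian_minimizes_coupled_problem
    {V : Type*} [Fintype V] [Nonempty V] [DecidableEq V]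
    (G : SimpleGraph V) [DecidableRel G.Adj] (hG : G.Connected)
    (r : ℕ) (n : V → ℕ)
    (A : (v : V) → Matrix (Fin r) (Fin (n v)) ℝ)
    (C : V → Fin r → ℝ)
    (f : (v : V) → (Fin (n v) → ℝ) → ℝ)
    (hf : ∀ v, ConvexOn ℝ Set.univ (f v))
    (hfd : ∀ v, Differentiable ℝ (f v))
    (xs : (v : V) → Fin (n v) → ℝ) (zs lams : V → Fin r → ℝ)
    (hlams : ∀ v, 0 ≤ lams v)
    (hsaddle₁ : ∀ lam : V → Fin r → ℝ, (∀ v, 0 ≤ lam v) →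
      (∑ v, f v (xs v)) +
        ∑ v, ∑ i, lam v i *
          ((A v).mulVec (xs v) + (∑ u, (G.lapMatrix ℝ) v u • zs u) + C v) i ≤
      (∑ v, f v (xs v)) +
        ∑ v, ∑ i, lams v i *
          ((A v).mulVec (xs v) + (∑ u, (G.lapMatrix ℝ) v u • zs u) + C v) i)
    (hsaddle₂ : ∀ (x : (v : V) → Fin (n v) → ℝ) (z : V → Fin r → ℝ),
      (∑ v, f v (xs v)) +
        ∑ v, ∑ i, lams v i *
          ((A v).mulVec (xs v) + (∑ u, (G.lapMatrix ℝ) v u • zs u) + C v) i ≤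
      (∑ v, f v (x v)) +
        ∑ v, ∑ i, lams v i *
          ((A v).mulVec (x v) + (∑ u, (G.lapMatrix ℝ) v u • z u) + C v) i) :
    ∀ x : (v : V) → Fin (n v) → ℝ,
      (∑ v, (A v).mulVec (x v)) + (∑ v, C v) ≤ 0 →
      ∑ v, f v (xs v) ≤ ∑ v, f v (x v) := by
  classical
  intro x hx
  -- the penalty term at the saddle point
  set P : ℝ := ∑ v, ∑ i, lams v i *
      ((A v).mulVec (xs v) + (∑ u, (G.lapMatrix ℝ) v u • zs u) + C v) i with hP
  -- P ≥ 0 (take lam = 0)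
  have hP0 : 0 ≤ P := by
    have h := hsaddle₁ (fun _ => 0) (fun _ => le_refl 0)
    simpa using h
  -- P ≤ 0 (take lam = 2 * lams)
  have hP1 : P ≤ 0 := by
    have h := hsaddle₁ (fun v => (2:ℝ) • lams v)
      (fun v => smul_nonneg (by norm_num) (hlams v))
    simp only [Pi.smul_apply, smul_eq_mul, mul_assoc, ← Finset.mul_sum, ← hP] at h
    linarith
  have hPzero : P = 0 := le_antisymm hP1 hP0
  -- the coupled slack
  set s : Fin r → ℝ := fun i => ∑ v, ((A v).mulVec (x v) i + C v i) with hs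
  have hsle : ∀ i, s i ≤ 0 := by
    intro i
    have := hx i
    simpa [hs, Finset.sum_add_distrib] using this
  set N : ℝ := (Fintype.card V : ℝ) with hN
  have hNpos : 0 < N := by positivity
  -- decoupling vectors
  set y : Fin r → V → ℝ :=
    fun i v => s i / N - ((A v).mulVec (x v) i + C v i) with hy
  have hysum : ∀ i, ∑ v, y i v = 0 := by
    intro i
    simp only [hy, Finset.sum_sub_distrib, Finset.sum_const, ← hs]
    rw [nsmul_eq_mul]
    field_simp
    rw [Finset.card_univ, ← hN]
    change N * s i - N * s i = N * 0
    ring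
  choose zc hzc using fun i => lap_surj' G hG (y i) (hysum i)
  set z : V → Fin r → ℝ := fun v i => zc i v with hzdef
  -- the decoupled constraint value is s i / N
  have hkey : ∀ v i,
      ((A v).mulVec (x v) + (∑ u, (G.lapMatrix ℝ) v u • z u) + C v) i = s i / N := by
    intro v i
    have h1 : (∑ u, (G.lapMatrix ℝ) v u • z u) i = (G.lapMatrix ℝ *ᵥ zc i) v := by
      simp [Matrix.mulVec, dotProduct, hzdef]
    simp only [Pi.add_apply, h1, hzc i]
    simp only [hy]
    ring
  have h := hsaddle₂ x z
  rw [hPzero, add_zero] at h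
  have hpen : ∑ v, ∑ i, lams v i *
      ((A v).mulVec (x v) + (∑ u, (G.lapMatrix ℝ) v u • z u) + C v) i ≤ 0 := by
    refine Finset.sum_nonpos fun v _ => Finset.sum_nonpos fun i _ => ?_
    rw [hkey v i]
    exact mul_nonpos_of_nonneg_of_nonpos (hlams v i)
      (div_nonpos_of_nonpos_of_nonneg (hsle i) hNpos.le)
  linarith
end
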